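/- Let G be the time-invariant dynamic Bayesian network DAG of the environment and suppose the joint distribution of the variables satisfies the global Markov condition with respect to G. If the latent component g_{i,t} has no directed path in G to any future reward node r_{t+k} (k > 0), then g_{i,t} is conditionally independent of r_{t+k}, for every k > 0, given the minimal latent state set g_t^min and the action a_t; hence pruning all such components leaves the conditional distribution of every future reward unchanged: P(r_{t+k} | g_t^min, a_t) = P(r_{t+k} | g_t, a_t). -/

import Mathlib

open Relation

/-- Nodes of the time-invariant dynamic Bayesian network: latent state
components `g_{i,t}`, actions `a_t`, and rewards `r_t`. -/
inductive DBNNode (d : ℕ) : Type where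
  | latent (i : Fin d) (t : ℕ)
  | action (t : ℕ)
  | reward (t : ℕ)
deriving DecidableEq

/-- The fixed binary structural masks of the DBN.  `cgg i j = true` encodes the
edge `g_{j,t-1} → g_{i,t}`, `cag i` the edge `a_{t-1} → g_{i,t}`, `cgr i` the
edge `g_{i,t-1} → r_t`, and `car` the edge `a_{t-1} → r_t`. -/
structure DBNMasks (d : ℕ) where
  cgg : Fin d → Fin d → Bool
  cag : Fin d → Bool
  cgr : Fin d → Bool
  car : Bool

/-- The directed edges of the time-invariant DBN graph `G`. -/
def DBNEdge {d : ℕ} (c : DBNMasks d) : DBNNode d → DBNNode d → Prop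
  | .latent j t, .latent i t' => t' = t + 1 ∧ c.cgg i j = true
  | .action t, .latent i t' => t' = t + 1 ∧ c.cag i = true
  | .latent i t, .reward t' => t' = t + 1 ∧ c.cgr i = true
  | .action t, .reward t' => t' = t + 1 ∧ c.car = true
  | _, _ => False

/-- Undirected adjacency induced by a directed edge relation. -/
def Adj {V : Type*} (E : V → V → Prop) (x y : V) : Prop := E x y ∨ E y x

/-- `p` is a (simple, undirected) path in the graph with edge relation `E`:
consecutive nodes are adjacent and no node repeats. -/
def IsPathList {V : Type*} (E : V → V → Prop) (p : List V) : Prop :=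
  p.Chain' (Adj E) ∧ p.Nodup

/-- A path `p` is blocked by the conditioning set `Z`: it contains a
chain `u → m → v` (in either direction) or a fork `u ← m → v` with middle
node `m ∈ Z`, or a collider `u → m ← v` with `m ∉ Z` and no descendant of
`m` in `Z`. -/
def BlockedBy {V : Type*} (E : V → V → Prop) (Z : Set V) (p : List V) : Prop :=
  ∃ u m v : V, [u, m, v] <:+: p ∧
    ((((E u m ∧ E m v) ∨ (E v m ∧ E m u) ∨ (E m u ∧ E m v)) ∧ m ∈ Z) ∨
      ((E u m ∧ E v m) ∧ m ∉ Z ∧ ∀ w : V, Relation.TransGen E m w → w ∉ Z))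

/-- `Z` d-separates `X` from `Y` in the graph with edge relation `E`: every
path between a node of `X` and a node of `Y` is blocked by `Z`. -/
def DSep {V : Type*} (E : V → V → Prop) (X Y Z : Set V) : Prop :=
  ∀ x ∈ X, ∀ y ∈ Y, ∀ p : List V,
    IsPathList E p → p.head? = some x → p.getLast? = some y → BlockedBy E Z p

/-- The joint distribution (represented abstractly by its ternary conditional
independence relation `CI X Y Z`, "X ⫫ Y given Z") satisfies the global Markov
condition w.r.t. the graph: d-separation implies conditional independence. -/
def GlobalMarkov {V : Type*} (E : V → V → Prop)
    (CI : Set V → Set V → Set V → Prop) : Prop :=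
  ∀ X Y Z : Set V, Disjoint X Y → Disjoint X Z → Disjoint Y Z →
    DSep E X Y Z → CI X Y Z

/-- The joint distribution is faithful to the graph: every conditional
independence corresponds to a d-separation. -/
def FaithfulTo {V : Type*} (E : V → V → Prop)
    (CI : Set V → Set V → Set V → Prop) : Prop :=
  ∀ X Y Z : Set V, Disjoint X Y → Disjoint X Z → Disjoint Y Z →
    CI X Y Z → DSep E X Y Z

/-- `g_{i,t} ∈ g_t^min` iff `c_i^{g→r} = 1` or `g_{i,t}` has a directed path in
`G` to a future reward `r_{t+k}` (some `k > 0`) passing through other latent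
state components. -/
def InMinSet {d : ℕ} (c : DBNMasks d) (i : Fin d) (t : ℕ) : Prop :=
  c.cgr i = true ∨
    ∃ k : ℕ, 0 < k ∧ ∃ (j : Fin d) (s : ℕ),
      Relation.TransGen (DBNEdge c) (DBNNode.latent i t) (DBNNode.latent j s) ∧
      Relation.TransGen (DBNEdge c) (DBNNode.latent j s) (DBNNode.reward (t + k))

/-- The minimal latent state set `g_t^min`, as a set of nodes of `G`. -/
def MinSet {d : ℕ} (c : DBNMasks d) (t : ℕ) : Set (DBNNode d) :=
  {n | ∃ i : Fin d, n = DBNNode.latent i t ∧ InMinSet c i t}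


namespace DBNAux

open Relation List

variable {d : ℕ} {c : DBNMasks d}

/-- Time index of a node. -/
def tm : DBNNode d → ℕ
  | .latent _ t => t
  | .action t => t
  | .reward t => t

lemma edge_time : ∀ {u v : DBNNode d}, DBNEdge c u v → tm v = tm u + 1 := by
  intro u v h
  cases u <;> cases v <;> first
    | exact h.elim
    | exact h.1

lemma no_edge_from_reward {s : ℕ} {v : DBNNode d} (h : DBNEdge c (.reward s) v) : False := by
  cases v <;> exact h

lemma no_edge_to_action {s : ℕ} {u : DBNNode d} (h : DBNEdge c u (.action s)) : False := by
  cases u <;> exact h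

lemma transGen_time {u v : DBNNode d} (h : TransGen (DBNEdge c) u v) : tm u < tm v := by
  induction h with
  | single h => have := edge_time h; omega
  | tail _ h ih => have := edge_time h; omega

lemma no_transGen_to_action {u : DBNNode d} {s : ℕ}
    (h : TransGen (DBNEdge c) u (.action s)) : False := by
  rcases TransGen.tail'_iff.mp h with ⟨b, -, hb⟩
  exact no_edge_to_action hb

lemma inMinSet_of_transGen {j : Fin d} {t w : ℕ}
    (h : TransGen (DBNEdge c) (.latent j t) (.reward w)) : InMinSet c j t := by
  have htw : t < w := transGen_time h
  rcases TransGen.tail'_iff.mp h with ⟨b, hxb, hbw⟩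
  rcases reflTransGen_iff_eq_or_transGen.mp hxb with heq | hT
  · subst heq
    exact Or.inl hbw.2
  · cases b with
    | latent j' s =>
        refine Or.inr ⟨w - t, by omega, j', s, hT, ?_⟩
        have hw : t + (w - t) = w := by omega
        rw [hw]
        exact TransGen.single hbw
    | action s => exact (no_transGen_to_action hT).elim
    | reward s => exact (no_edge_from_reward hbw).elim

lemma inMinSet_transGen {i : Fin d} {t : ℕ} (h : InMinSet c i t) :
    ∃ k, 0 < k ∧ TransGen (DBNEdge c) (.latent i t) (.reward (t + k)) := by
  rcases h with h | ⟨k, hk, j, s, h1, h2⟩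
  · exact ⟨1, Nat.one_pos, TransGen.single ⟨rfl, h⟩⟩
  · exact ⟨k, hk, h1.trans h2⟩

lemma mem_Z {t : ℕ} {n : DBNNode d} (h : n ∈ MinSet c t ∪ {DBNNode.action t}) : tm n = t := by
  rcases h with ⟨i, rfl, -⟩ | h
  · rfl
  · rcases h with rfl
    rfl

lemma not_mem_Z_of_time {t : ℕ} {n : DBNNode d} (h : t < tm n) :
    n ∉ MinSet c t ∪ {DBNNode.action t} := by
  intro hn
  have := mem_Z hn
  omega

lemma blockedBy_cons {V : Type*} {E : V → V → Prop} {Z : Set V} {a : V} {l : List V}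
    (h : BlockedBy E Z l) : BlockedBy E Z (a :: l) := by
  obtain ⟨u, m, v, hinf, hc⟩ := h
  exact ⟨u, m, v, hinf.trans (List.infix_cons (List.infix_refl _)), hc⟩

/-- If a path starts with a forward edge from a node at time `≥ t`, then either
it is fully directed or it contains a collider at time `> t`. -/
lemma forward_or_collider {t : ℕ} :
    ∀ (q : List (DBNNode d)) (a b : DBNNode d), t ≤ tm a → DBNEdge c a b →
      List.Chain' (Adj (DBNEdge c)) (b :: q) →
      List.Chain' (DBNEdge c) (a :: b :: q) ∨
        ∃ u m v, [u, m, v] <:+: (a :: b :: q) ∧ DBNEdge c u m ∧ DBNEdge c v m ∧ t < tm m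
  | [], a, b, _, hab, _ => Or.inl (List.isChain_pair.mpr hab)
  | v :: q', a, b, ha, hab, hch => by
    have hb : tm b = tm a + 1 := edge_time hab
    have hadj : Adj (DBNEdge c) b v := (List.isChain_cons_cons.mp hch).1
    have hch' := (List.isChain_cons_cons.mp hch).2
    rcases hadj with hbv | hvb
    · rcases forward_or_collider (t := t) q' b v (by omega) hbv hch' with h | ⟨u, m, w, hinf, h1, h2, h3⟩
      · exact Or.inl (List.isChain_cons_cons.mpr ⟨hab, h⟩)
      · exact Or.inr ⟨u, m, w, hinf.trans (List.infix_cons (List.infix_refl _)), h1, h2, h3⟩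
    · exact Or.inr ⟨a, b, v, ⟨[], q', rfl⟩, hab, hvb, by omega⟩

/-- Crossing lemma: a path starting at time `≤ t` and ending above time `t`
is either blocked or has a fully directed suffix starting at a time-`t` node. -/
lemma cross {t : ℕ} {y : DBNNode d} (hy : t < tm y) :
    ∀ (p : List (DBNNode d)) (b : DBNNode d),
      List.Chain' (Adj (DBNEdge c)) (b :: p) → tm b ≤ t →
      (b :: p).getLast? = some y →
      BlockedBy (DBNEdge c) (MinSet c t ∪ {DBNNode.action t}) (b :: p) ∨
        ∃ m q, (m :: q) <:+ (b :: p) ∧ tm m = t ∧ q ≠ [] ∧ List.Chain' (DBNEdge c) (m :: q)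
  | [], b, _, hb, hlast => by
      have hby : b = y := by simpa using hlast
      subst hby
      omega
  | v :: p', b, hch, hb, hlast => by
      have hadj : Adj (DBNEdge c) b v := (List.isChain_cons_cons.mp hch).1
      have hch' := (List.isChain_cons_cons.mp hch).2
      have hlast' : (v :: p').getLast? = some y := by
        rwa [List.getLast?_cons_cons] at hlast
      rcases hadj with hbv | hvb
      · have hv : tm v = tm b + 1 := edge_time hbv
        rcases le_or_gt (tm v) t with h | h
        · rcases cross hy p' v hch' h hlast' with hB | ⟨m, q, hsuf, h1, h2, h3⟩
          · exact Or.inl (blockedBy_cons hB)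
          · exact Or.inr ⟨m, q, hsuf.trans (List.suffix_cons b (v :: p')), h1, h2, h3⟩
        · have hbt : tm b = t := by omega
          rcases forward_or_collider p' b v (le_of_eq hbt.symm) hbv hch' with
            hC | ⟨u, m, w, hinf, h1, h2, h3⟩
          · exact Or.inr ⟨b, v :: p', List.suffix_refl _, hbt, by simp, hC⟩
          · refine Or.inl ⟨u, m, w, hinf, Or.inr ⟨⟨h1, h2⟩, not_mem_Z_of_time h3, ?_⟩⟩
            intro w' hw'
            exact not_mem_Z_of_time (lt_trans h3 (transGen_time hw'))
      · have hv : tm b = tm v + 1 := edge_time hvb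
        rcases cross hy p' v hch' (by omega) hlast' with hB | ⟨m, q, hsuf, h1, h2, h3⟩
        · exact Or.inl (blockedBy_cons hB)
        · exact Or.inr ⟨m, q, hsuf.trans (List.suffix_cons b (v :: p')), h1, h2, h3⟩

lemma chain'_transGen :
    ∀ (q : List (DBNNode d)) (m y : DBNNode d),
      List.Chain' (DBNEdge c) (m :: q) → (m :: q).getLast? = some y → q ≠ [] →
      TransGen (DBNEdge c) m y
  | [], _, _, _, _, h => absurd rfl h
  | [v], m, y, hch, hlast, _ => by
      have hyv : v = y := by simpa using hlast
      subst hyv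
      exact TransGen.single (List.isChain_cons_cons.mp hch).1
  | v :: w :: q', m, y, hch, hlast, _ =>
      TransGen.head (List.isChain_cons_cons.mp hch).1
        (chain'_transGen (w :: q') v y (List.isChain_cons_cons.mp hch).2
          (by rwa [List.getLast?_cons_cons] at hlast) (by simp))

/-- Main blocking lemma. -/
lemma blocked_main {t k : ℕ} (hk : 0 < k) {x : DBNNode d}
    (hNo : ∀ w, ¬ TransGen (DBNEdge c) x (DBNNode.reward w)) (hxt : tm x ≤ t) :
    ∀ p : List (DBNNode d), List.Chain' (Adj (DBNEdge c)) p →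
      p.head? = some x → p.getLast? = some (DBNNode.reward (t + k)) →
      BlockedBy (DBNEdge c) (MinSet c t ∪ {DBNNode.action t}) p := by
  intro p hch hhead hlast
  rcases p with - | ⟨a, p'⟩
  · simp at hhead
  · have hax : a = x := by simpa using hhead
    subst hax
    have hyt : t < tm (DBNNode.reward (t + k) : DBNNode d) := by
      show t < t + k
      omega
    rcases cross hyt p' a hch hxt hlast with hB | ⟨m, q, hsuf, hmt, hqne, hchE⟩
    · exact hB
    · obtain ⟨pre, hpre⟩ := hsuf
      have hlastq : (m :: q).getLast? = some (DBNNode.reward (t + k)) := by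
        rw [← hpre, List.getLast?_append_of_ne_nil pre (by simp)] at hlast
        exact hlast
      have hT : TransGen (DBNEdge c) m (DBNNode.reward (t + k)) :=
        chain'_transGen q m _ hchE hlastq hqne
      rcases List.eq_nil_or_concat pre with rfl | ⟨pre', u, rfl⟩
      · have hmx : m = a := by
          have := hpre
          simp at this
          exact this.1
        subst hmx
        exact absurd hT (hNo _)
      · rcases q with - | ⟨v, q0⟩
        · exact absurd rfl hqne
        · have hinf2 : (u :: m :: v :: q0) <:+: (a :: p') :=
            ⟨pre', [], by simpa using hpre⟩
          have hinf3 : [u, m, v] <:+: (a :: p') :=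
            List.IsInfix.trans ⟨[], q0, rfl⟩ hinf2
          have hAdj : Adj (DBNEdge c) u m :=
            (List.isChain_cons_cons.mp (hch.infix hinf3)).1
          have hEmv : DBNEdge c m v := (List.isChain_cons_cons.mp hchE).1
          have hmZ : m ∈ MinSet c t ∪ {DBNNode.action t} := by
            cases m with
            | latent j' s =>
                have hs : s = t := hmt
                subst hs
                exact Or.inl ⟨j', rfl, inMinSet_of_transGen hT⟩
            | action s =>
                have hs : s = t := hmt
                subst hs
                exact Or.inr rfl
            | reward s => exact (no_edge_from_reward hEmv).elim
          refine ⟨u, m, v, hinf3, Or.inl ⟨?_, hmZ⟩⟩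
          rcases hAdj with h | h
          · exact Or.inl ⟨h, hEmv⟩
          · exact Or.inr (Or.inr ⟨h, hEmv⟩)

lemma blockedBy_reverse {V : Type*} {E : V → V → Prop} {Z : Set V} {l : List V}
    (h : BlockedBy E Z l.reverse) : BlockedBy E Z l := by
  obtain ⟨u, m, v, hinf, hc⟩ := h
  have hinf' : [v, m, u] <:+: l := by
    have : ([v, m, u] : List V).reverse <:+: l.reverse := by simpa using hinf
    exact List.reverse_infix.mp this
  refine ⟨v, m, u, hinf', ?_⟩
  tauto

end DBNAux

/-- Under the global Markov condition, a latent component with no directed path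
to any future reward is conditionally independent of every future reward
`r_{t+k}` given `g_t^min` and `a_t`; hence pruning all such components leaves
the conditional distribution of every future reward unchanged, i.e. each
future reward is conditionally independent of the whole set of pruned
components given `g_t^min` and `a_t`. -/
theorem ci_of_no_directed_path_to_future_reward (d : ℕ) (c : DBNMasks d)
    (CI : Set (DBNNode d) → Set (DBNNode d) → Set (DBNNode d) → Prop)
    (hMarkov : GlobalMarkov (DBNEdge c) CI) (i : Fin d) (t : ℕ)
    (hNoPath : ∀ k : ℕ, 0 < k →
      ¬ Relation.TransGen (DBNEdge c) (DBNNode.latent i t) (DBNNode.reward (t + k))) :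
    (∀ k : ℕ, 0 < k →
      CI {DBNNode.latent i t} {DBNNode.reward (t + k)}
        (MinSet c t ∪ {DBNNode.action t})) ∧
    (∀ k : ℕ, 0 < k →
      CI {DBNNode.reward (t + k)}
        {n : DBNNode d | ∃ j : Fin d, n = DBNNode.latent j t ∧ ¬ InMinSet c j t}
        (MinSet c t ∪ {DBNNode.action t})) := by
  classical
  have hNo : ∀ w, ¬ Relation.TransGen (DBNEdge c) (DBNNode.latent i t) (DBNNode.reward w) := by
    intro w hT
    have h1 : t < w := DBNAux.transGen_time hT
    have h2 : t + (w - t) = w := by omega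
    exact hNoPath (w - t) (by omega) (by rw [h2]; exact hT)
  have hxZ : (DBNNode.latent i t : DBNNode d) ∉ MinSet c t ∪ {DBNNode.action t} := by
    rintro (⟨i', heq, hmin⟩ | h)
    · cases heq
      obtain ⟨k, hk, hT⟩ := DBNAux.inMinSet_transGen hmin
      exact hNoPath k hk hT
    · simp at h
  constructor
  · intro k hk
    apply hMarkov
    · exact Set.disjoint_singleton.mpr (fun h => by cases h)
    · exact Set.disjoint_left.mpr (fun a ha => by rcases ha with rfl; exact hxZ)
    · refine Set.disjoint_left.mpr (fun a ha => ?_)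
      rcases ha with rfl
      rintro (⟨i', heq, -⟩ | h)
      · cases heq
      · cases h
    · intro x hx y hy p hp hh hl
      rcases hx with rfl
      rcases hy with rfl
      exact DBNAux.blocked_main hk hNo (le_refl t) p hp.1 hh hl
  · intro k hk
    apply hMarkov
    · refine Set.disjoint_left.mpr (fun a ha => ?_)
      rcases ha with rfl
      rintro ⟨j, heq, -⟩
      cases heq
    · refine Set.disjoint_left.mpr (fun a ha => ?_)
      rcases ha with rfl
      rintro (⟨i', heq, -⟩ | h)
      · cases heq
      · cases h
    · refine Set.disjoint_left.mpr (fun a ha => ?_)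
      obtain ⟨j, rfl, hj⟩ := ha
      rintro (⟨i', heq, hmin⟩ | h)
      · cases heq
        exact hj hmin
      · cases h
    · intro x hx y hy p hp hh hl
      rcases hx with rfl
      obtain ⟨j, rfl, hj⟩ := hy
      have hNoj : ∀ w, ¬ Relation.TransGen (DBNEdge c) (DBNNode.latent j t) (DBNNode.reward w) :=
        fun w hT => hj (DBNAux.inMinSet_of_transGen hT)
      apply DBNAux.blockedBy_reverse
      have hchr : List.Chain' (Adj (DBNEdge c)) p.reverse := by
        refine List.isChain_reverse.mpr ?_
        exact hp.1.imp (fun _ _ h => Or.symm h)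
      exact DBNAux.blocked_main hk hNoj (le_refl t) p.reverse hchr
        (by rw [List.head?_reverse]; exact hl)
        (by rw [List.getLast?_reverse]; exact hh)
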